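/- Every n×n alternating sign matrix A can be obtained from the identity matrix I_n by a finite sequence of ASM-interchanges; equivalently, there is a finite sequence of ASMs I_n = A_0, A_1, ..., A_m = A such that each A_{k+1} − A_k equals ±T_{p,q;r,s} for some indices p<q, r<s. -/

import Mathlib

/-- An alternating sign matrix: entries in {0,1,-1}, all row and column sums
equal 1, and all partial row and column sums (from the start) are 0 or 1. -/
def IsASM {n : ℕ} (A : Matrix (Fin n) (Fin n) ℤ) : Prop :=
  (∀ i j, A i j = 0 ∨ A i j = 1 ∨ A i j = -1) ∧
  (∀ i, ∑ j, A i j = 1) ∧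
  (∀ j, ∑ i, A i j = 1) ∧
  (∀ i k, (∑ j ∈ Finset.Iic k, A i j) = 0 ∨ (∑ j ∈ Finset.Iic k, A i j) = 1) ∧
  (∀ j k, (∑ i ∈ Finset.Iic k, A i j) = 0 ∨ (∑ i ∈ Finset.Iic k, A i j) = 1)

/-- The matrix T_{p,q;r,s}: +1 in positions (p,r), (q,s); -1 in (p,s), (q,r). -/
def Tmat {n : ℕ} (p q r s : Fin n) : Matrix (Fin n) (Fin n) ℤ :=
  Matrix.single p r 1 + Matrix.single q s 1 -
    Matrix.single p s 1 - Matrix.single q r 1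

/-- One ASM-interchange step: add ±T_{p,q;r,s} (p<q, r<s) so that the result
is again an ASM. -/
def ASMStep {n : ℕ} (A B : Matrix (Fin n) (Fin n) ℤ) : Prop :=
  IsASM B ∧ ∃ p q r s : Fin n, p < q ∧ r < s ∧
    (B = A + Tmat p q r s ∨ B = A - Tmat p q r s)

namespace ASMProof
open Finset

variable {n : ℕ}

/-- Partial row sum: sum of entries `A i j` with `j < b`. -/
def Rrow (A : Matrix (Fin n) (Fin n) ℤ) (i : Fin n) (b : ℕ) : ℤ :=
  ∑ j : Fin n, if (j : ℕ) < b then A i j else 0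

/-- Partial column sum: sum of entries `A i j` with `i < a`. -/
def Ccol (A : Matrix (Fin n) (Fin n) ℤ) (j : Fin n) (a : ℕ) : ℤ :=
  ∑ i : Fin n, if (i : ℕ) < a then A i j else 0

/-- Corner sum. -/
def S (A : Matrix (Fin n) (Fin n) ℤ) (a b : ℕ) : ℤ :=
  ∑ i : Fin n, if (i : ℕ) < a then Rrow A i b else 0

lemma sum_ite_succ (g : Fin n → ℤ) (a : ℕ) :
    (∑ i : Fin n, if (i : ℕ) < a + 1 then g i else 0)
      = (∑ i : Fin n, if (i : ℕ) < a then g i else 0)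
        + (if h : a < n then g ⟨a, h⟩ else 0) := by
  have key : ∀ i : Fin n, (if (i : ℕ) < a + 1 then g i else 0)
      = (if (i : ℕ) < a then g i else 0) + (if (i : ℕ) = a then g i else 0) := by
    intro i
    by_cases h1 : (i : ℕ) < a
    · rw [if_pos (by omega), if_pos h1, if_neg (by omega), add_zero]
    · by_cases h2 : (i : ℕ) = a
      · rw [if_pos (by omega), if_neg h1, if_pos h2, zero_add]
      · rw [if_neg (by omega), if_neg h1, if_neg h2, add_zero]
  rw [Finset.sum_congr rfl fun i _ => key i, Finset.sum_add_distrib]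
  congr 1
  by_cases h : a < n
  · rw [dif_pos h, Finset.sum_eq_single ⟨a, h⟩]
    · simp
    · intro j _ hj
      rw [if_neg]
      exact fun hc => hj (Fin.ext hc)
    · simp
  · rw [dif_neg h, Finset.sum_eq_zero]
    intro j _
    rw [if_neg]
    exact fun hc => h (hc ▸ j.isLt)

lemma sum_ite_const (a : ℕ) :
    (∑ i : Fin n, if (i : ℕ) < a then (1 : ℤ) else 0) = (min a n : ℕ) := by
  induction a with
  | zero => simp
  | succ a ih =>
    rw [sum_ite_succ, ih]
    by_cases h : a < n
    · rw [dif_pos h]; push_cast; omega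
    · rw [dif_neg h]; push_cast; omega

lemma Rrow_Iic (A : Matrix (Fin n) (Fin n) ℤ) (i k : Fin n) :
    (∑ j ∈ Finset.Iic k, A i j) = Rrow A i ((k : ℕ) + 1) := by
  unfold Rrow
  rw [← Finset.sum_filter]
  congr 1
  ext j
  simp only [Finset.mem_Iic, Finset.mem_filter, Finset.mem_univ, true_and, Fin.le_def]
  omega

lemma Ccol_Iic (A : Matrix (Fin n) (Fin n) ℤ) (j k : Fin n) :
    (∑ i ∈ Finset.Iic k, A i j) = Ccol A j ((k : ℕ) + 1) := by
  unfold Ccol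
  rw [← Finset.sum_filter]
  congr 1
  ext i
  simp only [Finset.mem_Iic, Finset.mem_filter, Finset.mem_univ, true_and, Fin.le_def]
  omega

lemma Rrow_mem {A : Matrix (Fin n) (Fin n) ℤ} (hA : IsASM A) (i : Fin n) (b : ℕ) :
    Rrow A i b = 0 ∨ Rrow A i b = 1 := by
  rcases Nat.eq_zero_or_pos b with rfl | hb
  · left; simp [Rrow]
  by_cases hbn : b ≤ n
  · have hb1 : b - 1 < n := by omega
    have h := hA.2.2.2.1 i ⟨b - 1, hb1⟩
    rw [Rrow_Iic] at h
    have e : b - 1 + 1 = b := by omega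
    rw [e] at h
    exact h
  · right
    have e : Rrow A i b = ∑ j, A i j :=
      Finset.sum_congr rfl fun j _ => if_pos (by omega)
    rw [e]; exact hA.2.1 i

lemma Ccol_mem {A : Matrix (Fin n) (Fin n) ℤ} (hA : IsASM A) (j : Fin n) (a : ℕ) :
    Ccol A j a = 0 ∨ Ccol A j a = 1 := by
  rcases Nat.eq_zero_or_pos a with rfl | ha
  · left; simp [Ccol]
  by_cases han : a ≤ n
  · have ha1 : a - 1 < n := by omega
    have h := hA.2.2.2.2 j ⟨a - 1, ha1⟩
    rw [Ccol_Iic] at h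
    have e : a - 1 + 1 = a := by omega
    rw [e] at h
    exact h
  · right
    have e : Ccol A j a = ∑ i, A i j :=
      Finset.sum_congr rfl fun i _ => if_pos (by omega)
    rw [e]; exact hA.2.2.1 j

lemma S_eq_col (A : Matrix (Fin n) (Fin n) ℤ) (a b : ℕ) :
    S A a b = ∑ j : Fin n, if (j : ℕ) < b then Ccol A j a else 0 := by
  unfold S Rrow Ccol
  have L : ∀ i : Fin n, (if (i : ℕ) < a then (∑ j : Fin n, if (j : ℕ) < b then A i j else 0) else 0)
      = ∑ j : Fin n, if ((i : ℕ) < a ∧ (j : ℕ) < b) then A i j else 0 := by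
    intro i
    by_cases h : (i : ℕ) < a <;> simp [h]
  have R : ∀ j : Fin n, (if (j : ℕ) < b then (∑ i : Fin n, if (i : ℕ) < a then A i j else 0) else 0)
      = ∑ i : Fin n, if ((i : ℕ) < a ∧ (j : ℕ) < b) then A i j else 0 := by
    intro j
    by_cases h : (j : ℕ) < b <;> simp [h]
  rw [Finset.sum_congr rfl fun i _ => L i, Finset.sum_congr rfl fun j _ => R j,
    Finset.sum_comm]


lemma Rrow_succ (A : Matrix (Fin n) (Fin n) ℤ) (i : Fin n) (b : ℕ) :
    Rrow A i (b + 1) = Rrow A i b + (if h : b < n then A i ⟨b, h⟩ else 0) :=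
  sum_ite_succ (fun j => A i j) b

lemma entry_eq (A : Matrix (Fin n) (Fin n) ℤ) (i j : Fin n) :
    A i j = Rrow A i ((j : ℕ) + 1) - Rrow A i (j : ℕ) := by
  rw [Rrow_succ, dif_pos j.isLt]
  simp

lemma S_succ_row (A : Matrix (Fin n) (Fin n) ℤ) (a b : ℕ) :
    S A (a + 1) b = S A a b + (if h : a < n then Rrow A ⟨a, h⟩ b else 0) :=
  sum_ite_succ (fun i => Rrow A i b) a

lemma S_succ_col (A : Matrix (Fin n) (Fin n) ℤ) (a b : ℕ) :
    S A a (b + 1) = S A a b + (if h : b < n then Ccol A ⟨b, h⟩ a else 0) := by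
  rw [S_eq_col, S_eq_col]
  exact sum_ite_succ (fun j => Ccol A j a) b

lemma Rrow_eq_S (A : Matrix (Fin n) (Fin n) ℤ) (i : Fin n) (b : ℕ) :
    Rrow A i b = S A ((i : ℕ) + 1) b - S A (i : ℕ) b := by
  rw [S_succ_row, dif_pos i.isLt]
  simp

lemma S_zero_left (A : Matrix (Fin n) (Fin n) ℤ) (b : ℕ) : S A 0 b = 0 := by
  simp [S]

lemma S_le_left {A : Matrix (Fin n) (Fin n) ℤ} (hA : IsASM A) (a b : ℕ) :
    S A a b ≤ (a : ℤ) := by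
  have h1 : S A a b ≤ ∑ i : Fin n, if (i : ℕ) < a then (1 : ℤ) else 0 := by
    apply Finset.sum_le_sum
    intro i _
    by_cases h : (i : ℕ) < a
    · rw [if_pos h, if_pos h]
      rcases Rrow_mem hA i b with h' | h' <;> omega
    · rw [if_neg h, if_neg h]
  rw [sum_ite_const] at h1
  have : ((min a n : ℕ) : ℤ) ≤ (a : ℤ) := by push_cast; omega
  omega

lemma S_le_right {A : Matrix (Fin n) (Fin n) ℤ} (hA : IsASM A) (a b : ℕ) :
    S A a b ≤ (b : ℤ) := by
  rw [S_eq_col]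
  have h1 : (∑ j : Fin n, if (j : ℕ) < b then Ccol A j a else 0)
      ≤ ∑ j : Fin n, if (j : ℕ) < b then (1 : ℤ) else 0 := by
    apply Finset.sum_le_sum
    intro j _
    by_cases h : (j : ℕ) < b
    · rw [if_pos h, if_pos h]
      rcases Ccol_mem hA j a with h' | h' <;> omega
    · rw [if_neg h, if_neg h]
  rw [sum_ite_const] at h1
  have : ((min b n : ℕ) : ℤ) ≤ (b : ℤ) := by push_cast; omega
  omega

lemma S_nonneg {A : Matrix (Fin n) (Fin n) ℤ} (hA : IsASM A) (a b : ℕ) :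
    0 ≤ S A a b := by
  apply Finset.sum_nonneg
  intro i _
  by_cases h : (i : ℕ) < a
  · rw [if_pos h]
    rcases Rrow_mem hA i b with h' | h' <;> omega
  · rw [if_neg h]

lemma S_top_left {A : Matrix (Fin n) (Fin n) ℤ} (hA : IsASM A) {a : ℕ} (ha : n ≤ a) (b : ℕ) :
    S A a b = (min b n : ℕ) := by
  rw [S_eq_col, ← sum_ite_const (n := n) b]
  apply Finset.sum_congr rfl
  intro j _
  by_cases h : (j : ℕ) < b
  · rw [if_pos h, if_pos h]
    have e : Ccol A j a = ∑ i, A i j :=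
      Finset.sum_congr rfl fun i _ => if_pos (by omega)
    rw [e]; exact hA.2.2.1 j
  · rw [if_neg h, if_neg h]

lemma S_top_right {A : Matrix (Fin n) (Fin n) ℤ} (hA : IsASM A) {b : ℕ} (hb : n ≤ b) (a : ℕ) :
    S A a b = (min a n : ℕ) := by
  rw [← sum_ite_const (n := n) a]
  apply Finset.sum_congr rfl
  intro i _
  by_cases h : (i : ℕ) < a
  · rw [if_pos h, if_pos h]
    have e : Rrow A i b = ∑ j, A i j :=
      Finset.sum_congr rfl fun j _ => if_pos (by omega)
    rw [e]; exact hA.2.1 i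
  · rw [if_neg h, if_neg h]

lemma Rrow_add (A B : Matrix (Fin n) (Fin n) ℤ) (i : Fin n) (b : ℕ) :
    Rrow (A + B) i b = Rrow A i b + Rrow B i b := by
  unfold Rrow
  rw [← Finset.sum_add_distrib]
  exact Finset.sum_congr rfl fun j _ => by split <;> simp [Matrix.add_apply]

lemma Rrow_sub (A B : Matrix (Fin n) (Fin n) ℤ) (i : Fin n) (b : ℕ) :
    Rrow (A - B) i b = Rrow A i b - Rrow B i b := by
  unfold Rrow
  rw [← Finset.sum_sub_distrib]
  exact Finset.sum_congr rfl fun j _ => by split <;> simp [Matrix.sub_apply]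

lemma Ccol_add (A B : Matrix (Fin n) (Fin n) ℤ) (j : Fin n) (a : ℕ) :
    Ccol (A + B) j a = Ccol A j a + Ccol B j a := by
  unfold Ccol
  rw [← Finset.sum_add_distrib]
  exact Finset.sum_congr rfl fun i _ => by split <;> simp [Matrix.add_apply]

lemma Ccol_sub (A B : Matrix (Fin n) (Fin n) ℤ) (j : Fin n) (a : ℕ) :
    Ccol (A - B) j a = Ccol A j a - Ccol B j a := by
  unfold Ccol
  rw [← Finset.sum_sub_distrib]
  exact Finset.sum_congr rfl fun i _ => by split <;> simp [Matrix.sub_apply]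

lemma Rrow_std (u v i : Fin n) (b : ℕ) :
    Rrow (Matrix.single u v (1 : ℤ)) i b = if u = i ∧ (v : ℕ) < b then 1 else 0 := by
  unfold Rrow
  rw [Finset.sum_eq_single v]
  · by_cases h1 : (v : ℕ) < b <;> by_cases h2 : u = i <;>
      simp [Matrix.single, h1, h2]
  · intro j _ hj
    split
    · simp [Matrix.single, Matrix.of_apply, hj.symm]
    · rfl
  · simp

lemma Ccol_std (u v j : Fin n) (a : ℕ) :
    Ccol (Matrix.single u v (1 : ℤ)) j a = if v = j ∧ (u : ℕ) < a then 1 else 0 := by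
  unfold Ccol
  rw [Finset.sum_eq_single u]
  · by_cases h1 : (u : ℕ) < a <;> by_cases h2 : v = j <;>
      simp [Matrix.single, h1, h2]
  · intro i _ hi
    split
    · simp [Matrix.single, Matrix.of_apply, hi.symm]
    · rfl
  · simp

lemma Rrow_Tmat (p q r s i : Fin n) (b : ℕ) :
    Rrow (Tmat p q r s) i b =
      (if p = i ∧ (r : ℕ) < b then 1 else 0) + (if q = i ∧ (s : ℕ) < b then 1 else 0)
      - (if p = i ∧ (s : ℕ) < b then 1 else 0) - (if q = i ∧ (r : ℕ) < b then 1 else 0) := by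
  unfold Tmat
  rw [Rrow_sub, Rrow_sub, Rrow_add, Rrow_std, Rrow_std, Rrow_std, Rrow_std]

lemma Ccol_Tmat (p q r s j : Fin n) (a : ℕ) :
    Ccol (Tmat p q r s) j a =
      (if r = j ∧ (p : ℕ) < a then 1 else 0) + (if s = j ∧ (q : ℕ) < a then 1 else 0)
      - (if s = j ∧ (p : ℕ) < a then 1 else 0) - (if r = j ∧ (q : ℕ) < a then 1 else 0) := by
  unfold Tmat
  rw [Ccol_sub, Ccol_sub, Ccol_add, Ccol_std, Ccol_std, Ccol_std, Ccol_std]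

lemma Tmat_apply (p q r s i j : Fin n) :
    Tmat p q r s i j =
      (if p = i ∧ r = j then 1 else 0) + (if q = i ∧ s = j then 1 else 0)
      - (if p = i ∧ s = j then 1 else 0) - (if q = i ∧ r = j then 1 else 0) := by
  simp [Tmat, Matrix.sub_apply, Matrix.add_apply, Matrix.single, Matrix.of_apply]

end ASMProof
namespace ASMProof2
open ASMProof Finset
variable {n : ℕ}

lemma full_row (M : Matrix (Fin n) (Fin n) ℤ) (i : Fin n) :
    (∑ j, M i j) = Rrow M i n :=
  Finset.sum_congr rfl fun j _ => (if_pos j.isLt).symm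

lemma full_col (M : Matrix (Fin n) (Fin n) ℤ) (j : Fin n) :
    (∑ i, M i j) = Ccol M j n :=
  Finset.sum_congr rfl fun i _ => (if_pos i.isLt).symm

lemma isASM_add {A : Matrix (Fin n) (Fin n) ℤ} (hA : IsASM A) (p q r s : Fin n)
    (hq : (p : ℕ) + 1 = (q : ℕ)) (hs : (r : ℕ) + 1 = (s : ℕ))
    (h1 : Rrow A p (s : ℕ) = 0) (h2 : Rrow A q (s : ℕ) = 1)
    (h3 : Ccol A r (q : ℕ) = 0) (h4 : Ccol A s (q : ℕ) = 1) :
    IsASM (A + Tmat p q r s) := by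
  have hpq : p ≠ q := by intro h; rw [h] at hq; omega
  have hrs : r ≠ s := by intro h; rw [h] at hs; omega
  have hApr : A p r = 0 ∨ A p r = -1 := by
    have e := entry_eq A p r
    rw [hs, h1] at e
    rcases Rrow_mem hA p (r : ℕ) with h | h <;> omega
  have hAps : A p s = 0 ∨ A p s = 1 := by
    have e := entry_eq A p s
    rw [h1] at e
    rcases Rrow_mem hA p ((s : ℕ) + 1) with h | h <;> omega
  have hAqr : A q r = 0 ∨ A q r = 1 := by
    have e := entry_eq A q r
    rw [hs, h2] at e
    rcases Rrow_mem hA q (r : ℕ) with h | h <;> omega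
  have hAqs : A q s = 0 ∨ A q s = -1 := by
    have e := entry_eq A q s
    rw [h2] at e
    rcases Rrow_mem hA q ((s : ℕ) + 1) with h | h <;> omega
  refine ⟨?_, ?_, ?_, ?_, ?_⟩
  · -- entries
    intro i j
    rw [Matrix.add_apply, Tmat_apply]
    by_cases hip : p = i
    · subst hip
      by_cases hjr : r = j
      · subst hjr
        rw [if_pos ⟨rfl, rfl⟩, if_neg (fun h => hpq h.1.symm),
          if_neg (fun h => hrs h.2.symm), if_neg (fun h => hpq h.1.symm)]
        rcases hApr with h | h <;> omega
      · by_cases hjs : s = j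
        · subst hjs
          rw [if_neg (fun h => hjr h.2), if_neg (fun h => hpq h.1.symm),
            if_pos ⟨rfl, rfl⟩, if_neg (fun h => hpq h.1.symm)]
          rcases hAps with h | h <;> omega
        · rw [if_neg (fun h => hjr h.2), if_neg (fun h => hjs h.2),
            if_neg (fun h => hjs h.2), if_neg (fun h => hjr h.2)]
          rcases hA.1 p j with h | h | h <;> omega
    · by_cases hiq : q = i
      · subst hiq
        by_cases hjr : r = j
        · subst hjr
          rw [if_neg (fun h => hpq h.1), if_neg (fun h => hrs h.2.symm),
            if_neg (fun h => hpq h.1), if_pos ⟨rfl, rfl⟩]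
          rcases hAqr with h | h <;> omega
        · by_cases hjs : s = j
          · subst hjs
            rw [if_neg (fun h => hpq h.1), if_pos ⟨rfl, rfl⟩,
              if_neg (fun h => hpq h.1), if_neg (fun h => hjr h.2)]
            rcases hAqs with h | h <;> omega
          · rw [if_neg (fun h => hpq h.1), if_neg (fun h => hjs h.2),
              if_neg (fun h => hpq h.1), if_neg (fun h => hjr h.2)]
            rcases hA.1 q j with h | h | h <;> omega
      · rw [if_neg (fun h => hip h.1), if_neg (fun h => hiq h.1),
          if_neg (fun h => hip h.1), if_neg (fun h => hiq h.1)]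
        rcases hA.1 i j with h | h | h <;> omega
  · -- row sums
    intro i
    rw [full_row, Rrow_add, Rrow_Tmat]
    have e : Rrow A i n = 1 := by rw [← full_row]; exact hA.2.1 i
    by_cases hip : p = i <;> by_cases hiq : q = i <;>
      simp only [hip, hiq, r.isLt, s.isLt, and_true, if_true, if_false,
        true_and, false_and, and_false, if_neg (fun h : False => h)] <;>
      simp [e]
  · -- col sums
    intro j
    rw [full_col, Ccol_add, Ccol_Tmat]
    have e : Ccol A j n = 1 := by rw [← full_col]; exact hA.2.2.1 j
    by_cases hjr : r = j <;> by_cases hjs : s = j <;>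
      simp only [hjr, hjs, p.isLt, q.isLt, and_true, if_true, if_false,
        true_and, false_and, and_false] <;>
      simp [e]
  · -- partial row sums
    intro i k
    rw [Rrow_Iic, Rrow_add, Rrow_Tmat]
    by_cases hip : p = i
    · subst hip
      by_cases hb : (s : ℕ) < (k : ℕ) + 1
      · rw [if_pos ⟨rfl, by omega⟩, if_neg (fun h => hpq h.1.symm),
          if_pos ⟨rfl, hb⟩, if_neg (fun h => hpq h.1.symm)]
        rcases Rrow_mem hA p ((k : ℕ) + 1) with h | h <;> omega
      · by_cases hbr : (r : ℕ) < (k : ℕ) + 1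
        · have hbs : (k : ℕ) + 1 = (s : ℕ) := by omega
          rw [if_pos ⟨rfl, hbr⟩, if_neg (fun h => hpq h.1.symm),
            if_neg (fun h => hb h.2), if_neg (fun h => hpq h.1.symm), hbs, h1]
          right; ring
        · rw [if_neg (fun h => hbr h.2), if_neg (fun h => hpq h.1.symm),
            if_neg (fun h => hb h.2), if_neg (fun h => hbr h.2)]
          rcases Rrow_mem hA p ((k : ℕ) + 1) with h | h <;> omega
    · by_cases hiq : q = i
      · subst hiq
        by_cases hb : (s : ℕ) < (k : ℕ) + 1
        · rw [if_neg (fun h => hpq h.1), if_pos ⟨rfl, hb⟩,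
            if_neg (fun h => hpq h.1), if_pos ⟨rfl, by omega⟩]
          rcases Rrow_mem hA q ((k : ℕ) + 1) with h | h <;> omega
        · by_cases hbr : (r : ℕ) < (k : ℕ) + 1
          · have hbs : (k : ℕ) + 1 = (s : ℕ) := by omega
            rw [if_neg (fun h => hpq h.1), if_neg (fun h => hb h.2),
              if_neg (fun h => hpq h.1), if_pos ⟨rfl, hbr⟩, hbs, h2]
            left; ring
          · rw [if_neg (fun h => hpq h.1), if_neg (fun h => hb h.2),
              if_neg (fun h => hpq h.1), if_neg (fun h => hbr h.2)]
            rcases Rrow_mem hA q ((k : ℕ) + 1) with h | h <;> omega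
      · rw [if_neg (fun h => hip h.1), if_neg (fun h => hiq h.1),
          if_neg (fun h => hip h.1), if_neg (fun h => hiq h.1)]
        rcases Rrow_mem hA i ((k : ℕ) + 1) with h | h <;> omega
  · -- partial col sums
    intro j k
    rw [Ccol_Iic, Ccol_add, Ccol_Tmat]
    by_cases hjr : r = j
    · subst hjr
      by_cases ha : (q : ℕ) < (k : ℕ) + 1
      · rw [if_pos ⟨rfl, by omega⟩, if_neg (fun h => hrs h.1.symm),
          if_neg (fun h => hrs h.1.symm), if_pos ⟨rfl, ha⟩]
        rcases Ccol_mem hA r ((k : ℕ) + 1) with h | h <;> omega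
      · by_cases hap : (p : ℕ) < (k : ℕ) + 1
        · have haq : (k : ℕ) + 1 = (q : ℕ) := by omega
          rw [if_pos ⟨rfl, hap⟩, if_neg (fun h => hrs h.1.symm),
            if_neg (fun h => hrs h.1.symm), if_neg (fun h => ha h.2), haq, h3]
          right; ring
        · rw [if_neg (fun h => hap h.2), if_neg (fun h => hrs h.1.symm),
            if_neg (fun h => hrs h.1.symm), if_neg (fun h => ha h.2)]
          rcases Ccol_mem hA r ((k : ℕ) + 1) with h | h <;> omega
    · by_cases hjs : s = j
      · subst hjs
        by_cases ha : (q : ℕ) < (k : ℕ) + 1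
        · rw [if_neg (fun h => hrs h.1), if_pos ⟨rfl, ha⟩,
            if_pos ⟨rfl, by omega⟩, if_neg (fun h => hrs h.1)]
          rcases Ccol_mem hA s ((k : ℕ) + 1) with h | h <;> omega
        · by_cases hap : (p : ℕ) < (k : ℕ) + 1
          · have haq : (k : ℕ) + 1 = (q : ℕ) := by omega
            rw [if_neg (fun h => hrs h.1), if_neg (fun h => ha h.2),
              if_pos ⟨rfl, hap⟩, if_neg (fun h => hrs h.1), haq, h4]
            left; ring
          · rw [if_neg (fun h => hrs h.1), if_neg (fun h => ha h.2),
              if_neg (fun h => hap h.2), if_neg (fun h => hrs h.1)]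
            rcases Ccol_mem hA s ((k : ℕ) + 1) with h | h <;> omega
      · rw [if_neg (fun h => hjr h.1), if_neg (fun h => hjs h.1),
          if_neg (fun h => hjs h.1), if_neg (fun h => hjr h.1)]
        rcases Ccol_mem hA j ((k : ℕ) + 1) with h | h <;> omega

end ASMProof2
namespace ASMProof3
open ASMProof ASMProof2 Finset
variable {n : ℕ}

lemma S_add (A B : Matrix (Fin n) (Fin n) ℤ) (a b : ℕ) :
    S (A + B) a b = S A a b + S B a b := by
  unfold S
  rw [← Finset.sum_add_distrib]
  exact Finset.sum_congr rfl fun i _ => by split <;> simp [Rrow_add]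

lemma S_std (u v : Fin n) (x y : ℕ) :
    S (Matrix.single u v (1 : ℤ)) x y
      = if (u : ℕ) < x ∧ (v : ℕ) < y then 1 else 0 := by
  unfold S
  rw [Finset.sum_eq_single u]
  · rw [Rrow_std]
    by_cases h1 : (u : ℕ) < x <;> by_cases h2 : (v : ℕ) < y <;> simp [h1, h2]
  · intro i _ hi
    split
    · rw [Rrow_std, if_neg (fun h => hi h.1.symm)]
    · rfl
  · simp

lemma S_sub (A B : Matrix (Fin n) (Fin n) ℤ) (a b : ℕ) :
    S (A - B) a b = S A a b - S B a b := by
  unfold S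
  rw [← Finset.sum_sub_distrib]
  exact Finset.sum_congr rfl fun i _ => by split <;> simp [Rrow_sub]

lemma S_Tmat (p q r s : Fin n)
    (hq : (p : ℕ) + 1 = (q : ℕ)) (hs : (r : ℕ) + 1 = (s : ℕ)) (x y : ℕ) :
    S (Tmat p q r s) x y = if x = (q : ℕ) ∧ y = (s : ℕ) then 1 else 0 := by
  unfold Tmat
  rw [S_sub, S_sub, S_add, S_std, S_std, S_std, S_std]
  split_ifs <;> omega

def Msum (A : Matrix (Fin n) (Fin n) ℤ) : ℤ :=
  ∑ x ∈ range (n + 1), ∑ y ∈ range (n + 1), (((min x y : ℕ) : ℤ) - S A x y)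

lemma term_nonneg {A : Matrix (Fin n) (Fin n) ℤ} (hA : IsASM A) (x y : ℕ) :
    0 ≤ ((min x y : ℕ) : ℤ) - S A x y := by
  have h1 := S_le_left hA x y
  have h2 := S_le_right hA x y
  push_cast
  omega

lemma Msum_nonneg {A : Matrix (Fin n) (Fin n) ℤ} (hA : IsASM A) : 0 ≤ Msum A :=
  Finset.sum_nonneg fun x _ => Finset.sum_nonneg fun y _ => term_nonneg hA x y

lemma S_eq_min_of_Msum {A : Matrix (Fin n) (Fin n) ℤ} (hA : IsASM A)
    (h0 : Msum A = 0) : ∀ x ≤ n, ∀ y ≤ n, S A x y = ((min x y : ℕ) : ℤ) := by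
  intro x hx y hy
  have hterm : ∀ x' ∈ range (n + 1),
      0 ≤ ∑ y' ∈ range (n + 1), (((min x' y' : ℕ) : ℤ) - S A x' y') :=
    fun x' _ => Finset.sum_nonneg fun y' _ => term_nonneg hA x' y'
  have h1 := (Finset.sum_eq_zero_iff_of_nonneg hterm).mp h0 x (mem_range.mpr (by omega))
  have hterm2 : ∀ y' ∈ range (n + 1), 0 ≤ ((min x y' : ℕ) : ℤ) - S A x y' :=
    fun y' _ => term_nonneg hA x y'
  have h2 := (Finset.sum_eq_zero_iff_of_nonneg hterm2).mp h1 y (mem_range.mpr (by omega))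
  omega

lemma eq_one_of {A : Matrix (Fin n) (Fin n) ℤ}
    (hmin : ∀ x ≤ n, ∀ y ≤ n, S A x y = ((min x y : ℕ) : ℤ)) : A = 1 := by
  ext i j
  have e := entry_eq A i j
  rw [Rrow_eq_S, Rrow_eq_S] at e
  rw [hmin ((i : ℕ) + 1) i.isLt ((j : ℕ) + 1) j.isLt,
    hmin (i : ℕ) i.isLt.le ((j : ℕ) + 1) j.isLt,
    hmin ((i : ℕ) + 1) i.isLt (j : ℕ) j.isLt.le,
    hmin (i : ℕ) i.isLt.le (j : ℕ) j.isLt.le] at e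
  rw [Matrix.one_apply]
  by_cases hij : i = j
  · rw [if_pos hij]
    have hv : (i : ℕ) = (j : ℕ) := by rw [hij]
    push_cast at e
    omega
  · rw [if_neg hij]
    have hv : (i : ℕ) ≠ (j : ℕ) := fun h => hij (Fin.ext h)
    push_cast at e
    omega

lemma Msum_step {A : Matrix (Fin n) (Fin n) ℤ} (p q r s : Fin n)
    (hq : (p : ℕ) + 1 = (q : ℕ)) (hs : (r : ℕ) + 1 = (s : ℕ)) :
    Msum (A + Tmat p q r s) = Msum A - 1 := by
  unfold Msum
  have key : ∀ x y : ℕ,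
      ((min x y : ℕ) : ℤ) - S (A + Tmat p q r s) x y
        = (((min x y : ℕ) : ℤ) - S A x y)
          - (if x = (q : ℕ) ∧ y = (s : ℕ) then 1 else 0) := by
    intro x y
    rw [S_add, S_Tmat p q r s hq hs]
    ring
  calc (∑ x ∈ range (n + 1), ∑ y ∈ range (n + 1),
          (((min x y : ℕ) : ℤ) - S (A + Tmat p q r s) x y))
      = ∑ x ∈ range (n + 1), ∑ y ∈ range (n + 1),
          ((((min x y : ℕ) : ℤ) - S A x y)
            - (if x = (q : ℕ) ∧ y = (s : ℕ) then 1 else 0)) := by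
        exact Finset.sum_congr rfl fun x _ => Finset.sum_congr rfl fun y _ => key x y
    _ = (∑ x ∈ range (n + 1), ∑ y ∈ range (n + 1), (((min x y : ℕ) : ℤ) - S A x y))
          - ∑ x ∈ range (n + 1), ∑ y ∈ range (n + 1),
              (if x = (q : ℕ) ∧ y = (s : ℕ) then (1 : ℤ) else 0) := by
        rw [← Finset.sum_sub_distrib]
        exact Finset.sum_congr rfl fun x _ => by rw [← Finset.sum_sub_distrib]
    _ = _ := by
        congr 1
        rw [Finset.sum_eq_single (q : ℕ)]
        · rw [Finset.sum_eq_single (s : ℕ)]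
          · rw [if_pos ⟨rfl, rfl⟩]
          · intro y _ hy; rw [if_neg (fun h => hy h.2)]
          · intro habs; exact absurd (mem_range.mpr (by omega)) habs
        · intro x _ hx; exact Finset.sum_eq_zero fun y _ => if_neg (fun h => hx h.1)
        · intro habs; exact absurd (mem_range.mpr (by omega)) habs

end ASMProof3
namespace ASMProof4
open ASMProof ASMProof2 ASMProof3 Finset
variable {n : ℕ}

lemma S_zero_right (A : Matrix (Fin n) (Fin n) ℤ) (a : ℕ) : S A a 0 = 0 := by
  simp [S, Rrow]

lemma exists_pred {A : Matrix (Fin n) (Fin n) ℤ} (hA : IsASM A) (hpos : 0 < Msum A) :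
    ∃ A', IsASM A' ∧ ASMStep A' A ∧ Msum A' = Msum A - 1 := by
  classical
  set Fc : Finset (ℕ × ℕ) := (range (n + 1) ×ˢ range (n + 1)).filter
    (fun z => S A z.1 z.2 < ((min z.1 z.2 : ℕ) : ℤ)) with hFc
  have hmemFc : ∀ z : ℕ × ℕ, z ∈ Fc ↔
      (z.1 ≤ n ∧ z.2 ≤ n ∧ S A z.1 z.2 < ((min z.1 z.2 : ℕ) : ℤ)) := by
    intro z
    rw [hFc, Finset.mem_filter, Finset.mem_product, mem_range, mem_range]
    constructor
    · rintro ⟨⟨h1, h2⟩, h3⟩; exact ⟨by omega, by omega, h3⟩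
    · rintro ⟨h1, h2, h3⟩; exact ⟨⟨by omega, by omega⟩, h3⟩
  have hne : Fc.Nonempty := by
    by_contra hempty
    rw [Finset.not_nonempty_iff_eq_empty] at hempty
    have hall : ∀ x ≤ n, ∀ y ≤ n, S A x y = ((min x y : ℕ) : ℤ) := by
      intro x hx y hy
      have hno : ¬ S A x y < ((min x y : ℕ) : ℤ) := by
        intro hlt
        have : (x, y) ∈ Fc := (hmemFc (x, y)).mpr ⟨hx, hy, hlt⟩
        rw [hempty] at this
        exact absurd this (Finset.notMem_empty _)
      have := term_nonneg hA x y
      omega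
    have hz : Msum A = 0 := by
      unfold Msum
      apply Finset.sum_eq_zero; intro x hx
      apply Finset.sum_eq_zero; intro y hy
      rw [hall x (by rw [mem_range] at hx; omega) y (by rw [mem_range] at hy; omega)]
      ring
    omega
  obtain ⟨z0, hz0, hmin0⟩ := Finset.exists_min_image Fc (fun z => S A z.1 z.2) hne
  set Fc' : Finset (ℕ × ℕ) := Fc.filter (fun z => S A z.1 z.2 = S A z0.1 z0.2) with hFc'
  have hne' : Fc'.Nonempty := ⟨z0, by rw [hFc', Finset.mem_filter]; exact ⟨hz0, rfl⟩⟩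
  obtain ⟨z, hzmem, hmax⟩ := Finset.exists_max_image Fc' (fun z => z.1 + z.2) hne'
  obtain ⟨a, b⟩ := z
  rw [hFc', Finset.mem_filter] at hzmem
  obtain ⟨hzFc, hzS⟩ := hzmem
  rw [hmemFc] at hzFc
  obtain ⟨ha, hb, hlt⟩ := hzFc
  simp only at hlt hzS hmax ⊢
  have hS0 := S_nonneg hA a b
  have ha0 : 0 < a := by
    rcases Nat.eq_zero_or_pos a with rfl | h
    · rw [S_zero_left] at hlt; simp at hlt
    · exact h
  have hb0 : 0 < b := by
    rcases Nat.eq_zero_or_pos b with rfl | h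
    · rw [S_zero_right] at hlt; simp at hlt
    · exact h
  have han : a < n := by
    by_contra h
    have e := S_top_left hA (by omega : n ≤ a) b
    rw [e] at hlt
    push_cast at hlt
    omega
  have hbn : b < n := by
    by_contra h
    have e := S_top_right hA (by omega : n ≤ b) a
    rw [e] at hlt
    push_cast at hlt
    omega
  have ham : a - 1 < n := by omega
  have hbm : b - 1 < n := by omega
  have hq : ((⟨a - 1, ham⟩ : Fin n) : ℕ) + 1 = ((⟨a, han⟩ : Fin n) : ℕ) := by
    simp; omega
  have hs' : ((⟨b - 1, hbm⟩ : Fin n) : ℕ) + 1 = ((⟨b, hbn⟩ : Fin n) : ℕ) := by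
    simp; omega
  -- the four local conditions
  have hstep1 : S A a b = S A (a - 1) b + Rrow A ⟨a - 1, ham⟩ b := by
    have e := S_succ_row A (a - 1) b
    rw [dif_pos ham, show a - 1 + 1 = a by omega] at e
    exact e
  have hstep2 : S A (a + 1) b = S A a b + Rrow A ⟨a, han⟩ b := by
    have e := S_succ_row A a b
    rw [dif_pos han] at e
    exact e
  have hstep3 : S A a b = S A a (b - 1) + Ccol A ⟨b - 1, hbm⟩ a := by
    have e := S_succ_col A a (b - 1)
    rw [dif_pos hbm, show b - 1 + 1 = b by omega] at e
    exact e
  have hstep4 : S A a (b + 1) = S A a b + Ccol A ⟨b, hbn⟩ a := by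
    have e := S_succ_col A a b
    rw [dif_pos hbn] at e
    exact e
  have h1 : Rrow A ⟨a - 1, ham⟩ b = 0 := by
    rcases Rrow_mem hA ⟨a - 1, ham⟩ b with h | h
    · exact h
    exfalso
    have hmem : (a - 1, b) ∈ Fc := by
      rw [hmemFc]
      refine ⟨by omega, hb, ?_⟩
      push_cast at hlt ⊢
      omega
    have hK := hmin0 (a - 1, b) hmem
    simp only at hK
    omega
  have h2 : Rrow A ⟨a, han⟩ b = 1 := by
    rcases Rrow_mem hA ⟨a, han⟩ b with h | h
    swap
    · exact h
    exfalso
    have hmem : (a + 1, b) ∈ Fc := by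
      rw [hmemFc]
      refine ⟨by omega, hb, ?_⟩
      push_cast at hlt ⊢
      omega
    have hmem' : (a + 1, b) ∈ Fc' := by
      rw [hFc', Finset.mem_filter]
      refine ⟨hmem, ?_⟩
      simp only
      omega
    have hK := hmax (a + 1, b) hmem'
    simp only at hK
    omega
  have h3 : Ccol A ⟨b - 1, hbm⟩ a = 0 := by
    rcases Ccol_mem hA ⟨b - 1, hbm⟩ a with h | h
    · exact h
    exfalso
    have hmem : (a, b - 1) ∈ Fc := by
      rw [hmemFc]
      refine ⟨ha, by omega, ?_⟩
      push_cast at hlt ⊢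
      omega
    have hK := hmin0 (a, b - 1) hmem
    simp only at hK
    omega
  have h4 : Ccol A ⟨b, hbn⟩ a = 1 := by
    rcases Ccol_mem hA ⟨b, hbn⟩ a with h | h
    swap
    · exact h
    exfalso
    have hmem : (a, b + 1) ∈ Fc := by
      rw [hmemFc]
      refine ⟨ha, by omega, ?_⟩
      push_cast at hlt ⊢
      omega
    have hmem' : (a, b + 1) ∈ Fc' := by
      rw [hFc', Finset.mem_filter]
      refine ⟨hmem, ?_⟩
      simp only
      omega
    have hK := hmax (a, b + 1) hmem'
    simp only at hK
    omega
  refine ⟨A + Tmat ⟨a - 1, ham⟩ ⟨a, han⟩ ⟨b - 1, hbm⟩ ⟨b, hbn⟩,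
    isASM_add hA _ _ _ _ hq hs' h1 h2 h3 h4,
    ⟨hA, ⟨a - 1, ham⟩, ⟨a, han⟩, ⟨b - 1, hbm⟩, ⟨b, hbn⟩, ?_, ?_, Or.inr ?_⟩,
    Msum_step _ _ _ _ hq hs'⟩
  · rw [Fin.lt_def]; simp; omega
  · rw [Fin.lt_def]; simp; omega
  · rw [add_sub_cancel_right]

end ASMProof4

theorem stmt_19 {n : ℕ} (A : Matrix (Fin n) (Fin n) ℤ) (hA : IsASM A) :
    Relation.ReflTransGen ASMStep (1 : Matrix (Fin n) (Fin n) ℤ) A := by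
  classical
  suffices H : ∀ (m : ℕ) (A : Matrix (Fin n) (Fin n) ℤ), IsASM A →
      (ASMProof3.Msum A).toNat ≤ m →
      Relation.ReflTransGen ASMStep (1 : Matrix (Fin n) (Fin n) ℤ) A from
    H (ASMProof3.Msum A).toNat A hA le_rfl
  intro m
  induction m with
  | zero =>
    intro A hA hm
    have h0 : ASMProof3.Msum A = 0 := by
      have := ASMProof3.Msum_nonneg hA
      omega
    have : A = 1 := ASMProof3.eq_one_of (ASMProof3.S_eq_min_of_Msum hA h0)
    rw [this]
  | succ m ih =>
    intro A hA hm
    by_cases h0 : ASMProof3.Msum A = 0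
    · have : A = 1 := ASMProof3.eq_one_of (ASMProof3.S_eq_min_of_Msum hA h0)
      rw [this]
    · have hpos : 0 < ASMProof3.Msum A :=
        lt_of_le_of_ne (ASMProof3.Msum_nonneg hA) (Ne.symm h0)
      obtain ⟨A', hA', hstep, hdec⟩ := ASMProof4.exists_pred hA hpos
      have hA'nonneg := ASMProof3.Msum_nonneg hA'
      exact (ih A' hA' (by omega)).tail hstep
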